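/- Public-coin soundness algebra: Let ρ, σ, τ be density matrices on ℂ^n, let ζ ≥ 0, and let F(a,b) = Tr(√(√a · b · √a)). If F(σ,τ)² ≤ ζ, then (1/2)·F(σ,ρ)² + (1/2)·F(ρ,τ)² ≤ 1/2 + √ζ/2. -/

import Mathlib

open Matrix
open scoped ComplexOrder InnerProductSpace

namespace Matrix.PosSemidef

/-- The positive semidefinite square root (the definition Mathlib used to provide). -/
noncomputable def sqrt {n : ℕ} {A : Matrix (Fin n) (Fin n) ℂ} (hA : A.PosSemidef) :
    Matrix (Fin n) (Fin n) ℂ :=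
  hA.1.eigenvectorUnitary.1 * diagonal ((↑) ∘ Real.sqrt ∘ hA.1.eigenvalues) *
    (star hA.1.eigenvectorUnitary : Matrix (Fin n) (Fin n) ℂ)

lemma posSemidef_sqrt {n : ℕ} {A : Matrix (Fin n) (Fin n) ℂ} (hA : A.PosSemidef) :
    hA.sqrt.PosSemidef := by
  have hd : (diagonal ((↑) ∘ Real.sqrt ∘ hA.1.eigenvalues : Fin n → ℂ)).PosSemidef :=
    posSemidef_diagonal_iff.mpr (fun i => Complex.zero_le_real.mpr (Real.sqrt_nonneg _))
  have h := hd.mul_mul_conjTranspose_same (hA.1.eigenvectorUnitary : Matrix (Fin n) (Fin n) ℂ)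
  convert h using 1
  simp [sqrt, star_eq_conjTranspose]

lemma sqrt_mul_self {n : ℕ} {A : Matrix (Fin n) (Fin n) ℂ} (hA : A.PosSemidef) :
    hA.sqrt * hA.sqrt = A := by
  have hU : (star hA.1.eigenvectorUnitary : Matrix (Fin n) (Fin n) ℂ) *
      (hA.1.eigenvectorUnitary : Matrix (Fin n) (Fin n) ℂ) = 1 := Unitary.coe_star_mul_self _
  have hD : diagonal ((↑) ∘ Real.sqrt ∘ hA.1.eigenvalues : Fin n → ℂ) *
      diagonal ((↑) ∘ Real.sqrt ∘ hA.1.eigenvalues : Fin n → ℂ) =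
      diagonal (RCLike.ofReal ∘ hA.1.eigenvalues) := by
    rw [diagonal_mul_diagonal]
    congr 1
    funext i
    simp only [Function.comp_apply]
    rw [← Complex.ofReal_mul, Real.mul_self_sqrt (hA.eigenvalues_nonneg i)]
    rfl
  conv_rhs => rw [hA.1.spectral_theorem, Unitary.conjStarAlgAut_apply]
  simp only [sqrt]
  rw [show ∀ (U D S : Matrix (Fin n) (Fin n) ℂ), U * D * S * (U * D * S) = U * (D * (S * U) * D) * S
    from fun U D S => by noncomm_ring, hU, Matrix.mul_one, hD, Matrix.mul_assoc]

end Matrix.PosSemidef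

/-- `√a * b * √a` is positive semidefinite whenever `a` and `b` are. -/
lemma sqrt_mul_mul_sqrt_posSemidef {n : ℕ} {a b : Matrix (Fin n) (Fin n) ℂ}
    (ha : a.PosSemidef) (hb : b.PosSemidef) :
    (ha.sqrt * b * ha.sqrt).PosSemidef := by
  have h := hb.mul_mul_conjTranspose_same ha.sqrt
  rwa [ha.posSemidef_sqrt.isHermitian.eq] at h

/-- The fidelity `F(a, b) = Tr(√(√a · b · √a))` of two positive semidefinite matrices. -/
noncomputable def fidelity {n : ℕ} {a b : Matrix (Fin n) (Fin n) ℂ}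
    (ha : a.PosSemidef) (hb : b.PosSemidef) : ℝ :=
  ((sqrt_mul_mul_sqrt_posSemidef ha hb).sqrt.trace).re

lemma sqrt_congr {n : ℕ} {A B : Matrix (Fin n) (Fin n) ℂ} (h : A = B)
    (hA : A.PosSemidef) (hB : B.PosSemidef) : hA.sqrt = hB.sqrt := by
  subst h; rfl

lemma psd_trace {n : ℕ} {N : Matrix (Fin n) (Fin n) ℂ} (hN : N.PosSemidef) :
    N.trace = (N.trace.re : ℂ) ∧ 0 ≤ N.trace.re := by
  have hd : ∀ i, 0 ≤ N i i := fun i => by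
    exact hN.diag_nonneg
  have h1 : ∀ i, (N i i).im = 0 ∧ 0 ≤ (N i i).re := fun i => by
    have := hd i
    rw [Complex.le_def] at this
    exact ⟨this.2.symm, by simpa using this.1⟩
  have him : N.trace.im = 0 := by
    rw [Matrix.trace, Complex.im_sum]
    exact Finset.sum_eq_zero fun i _ => (h1 i).1
  refine ⟨(Complex.ext (by simp) (by simp [him])), ?_⟩
  rw [Matrix.trace, Complex.re_sum]
  exact Finset.sum_nonneg fun i _ => (h1 i).2

noncomputable def vec {n : ℕ} (X : Matrix (Fin n) (Fin n) ℂ) :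
    EuclideanSpace ℂ (Fin n × Fin n) :=
  (WithLp.equiv 2 _).symm (fun p => X p.1 p.2)

lemma inner_vec {n : ℕ} (X Y : Matrix (Fin n) (Fin n) ℂ) :
    ⟪_root_.vec X, _root_.vec Y⟫_ℂ = (Xᴴ * Y).trace := by
  rw [Matrix.trace]
  simp only [PiLp.inner_apply, RCLike.inner_apply, _root_.vec, WithLp.equiv_symm_apply,
    Matrix.diag, Matrix.mul_apply, Matrix.conjTranspose_apply]
  rw [← Finset.univ_product_univ, Finset.sum_product]
  rw [Finset.sum_comm]
  exact Finset.sum_congr rfl fun _ _ => Finset.sum_congr rfl fun _ _ => mul_comm _ _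

lemma norm_vec_sq {n : ℕ} (X : Matrix (Fin n) (Fin n) ℂ) :
    (((‖_root_.vec X‖ ^ 2 : ℝ)) : ℂ) = (Xᴴ * X).trace := by
  rw [← inner_vec, inner_self_eq_norm_sq_to_K]
  norm_num

lemma trace_unitary_mul_psd_abs {n : ℕ} {Q N : Matrix (Fin n) (Fin n) ℂ}
    (hQ : Q ∈ Matrix.unitaryGroup (Fin n) ℂ) (hN : N.PosSemidef) :
    ‖(Q * N).trace‖ ≤ N.trace.re := by
  set S := hN.sqrt with hS
  have hSh : Sᴴ = S := hN.posSemidef_sqrt.isHermitian.eq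
  have hSS : S * S = N := hN.sqrt_mul_self
  have h1 : (Q * N).trace = ⟪_root_.vec (S * Qᴴ), _root_.vec S⟫_ℂ := by
    rw [inner_vec, conjTranspose_mul, conjTranspose_conjTranspose, hSh,
      Matrix.mul_assoc, hSS]
  have hxsq : ((‖_root_.vec (S * Qᴴ)‖ ^ 2 : ℝ) : ℂ) = N.trace := by
    rw [norm_vec_sq, conjTranspose_mul, conjTranspose_conjTranspose, hSh]
    rw [show Q * S * (S * Qᴴ) = Q * (S * S) * Qᴴ by noncomm_ring, hSS]
    rw [Matrix.trace_mul_cycle]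
    rw [show Qᴴ = star Q from rfl, (Matrix.mem_unitaryGroup_iff'.mp hQ : star Q * Q = 1)]
    simp
  have hysq : ((‖_root_.vec S‖ ^ 2 : ℝ) : ℂ) = N.trace := by
    rw [norm_vec_sq, hSh, hSS]
  have h2 : ‖_root_.vec (S * Qᴴ)‖ ^ 2 = ‖_root_.vec S‖ ^ 2 := by
    exact_mod_cast hxsq.trans hysq.symm
  have hxy : ‖_root_.vec (S * Qᴴ)‖ = ‖_root_.vec S‖ := by
    nlinarith [norm_nonneg (_root_.vec (S * Qᴴ)), norm_nonneg (_root_.vec S)]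
  have hre : ‖_root_.vec S‖ ^ 2 = N.trace.re := by
    have := congrArg Complex.re hysq
    rwa [Complex.ofReal_re] at this
  calc ‖(Q * N).trace‖ = ‖⟪_root_.vec (S * Qᴴ), _root_.vec S⟫_ℂ‖ := by rw [h1]
    _ ≤ ‖_root_.vec (S * Qᴴ)‖ * ‖_root_.vec S‖ := norm_inner_le_norm _ _
    _ = N.trace.re := by rw [hxy, ← sq, hre]

lemma toEuc_mul {n : ℕ} (A B : Matrix (Fin n) (Fin n) ℂ) (x : EuclideanSpace ℂ (Fin n)) :
    Matrix.toEuclideanLin (A * B) x = Matrix.toEuclideanLin A (Matrix.toEuclideanLin B x) := by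
  simp [Matrix.toEuclideanLin_apply, Matrix.mulVec_mulVec]

lemma polar_decomp {n : ℕ} (M : Matrix (Fin n) (Fin n) ℂ) :
    ∃ U ∈ Matrix.unitaryGroup (Fin n) ℂ,
      M = U * (Matrix.posSemidef_conjTranspose_mul_self M).sqrt := by
  have hMM := Matrix.posSemidef_conjTranspose_mul_self M
  set H := hMM.sqrt with hHdef
  have hHh : Hᴴ = H := hMM.posSemidef_sqrt.isHermitian.eq
  have hHH : H * H = Mᴴ * M := hMM.sqrt_mul_self
  set f := Matrix.toEuclideanLin M with hf
  set h := Matrix.toEuclideanLin H with hh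
  have hinner : ∀ x y, ⟪h x, h y⟫_ℂ = ⟪f x, f y⟫_ℂ := by
    intro x y
    have e1 : ⟪h x, h y⟫_ℂ = ⟪x, Matrix.toEuclideanLin (Hᴴ * H) y⟫_ℂ := by
      rw [toEuc_mul, Matrix.toEuclideanLin_conjTranspose_eq_adjoint,
        LinearMap.adjoint_inner_right]
    have e2 : ⟪f x, f y⟫_ℂ = ⟪x, Matrix.toEuclideanLin (Mᴴ * M) y⟫_ℂ := by
      rw [toEuc_mul, Matrix.toEuclideanLin_conjTranspose_eq_adjoint,
        LinearMap.adjoint_inner_right]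
    rw [e1, e2, hHh, hHH]
  have hnorm : ∀ x, ‖h x‖ = ‖f x‖ := by
    intro x
    have := hinner x x
    rw [inner_self_eq_norm_sq_to_K, inner_self_eq_norm_sq_to_K] at this
    have h2 : ‖h x‖ ^ 2 = ‖f x‖ ^ 2 := by exact_mod_cast this
    nlinarith [norm_nonneg (h x), norm_nonneg (f x)]
  have hker : LinearMap.ker h ≤ LinearMap.ker f := by
    intro x hx
    rw [LinearMap.mem_ker] at hx ⊢
    have := hnorm x
    rw [hx, norm_zero] at this
    exact norm_eq_zero.mp this.symm
  set g := Submodule.liftQ (LinearMap.ker h) f hker with hg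
  set e := LinearMap.quotKerEquivRange h with he
  set φ := g ∘ₗ (e.symm : ↥(LinearMap.range h) →ₗ[ℂ] _) with hφ
  have hφ_apply : ∀ x : EuclideanSpace ℂ (Fin n),
      φ ⟨h x, LinearMap.mem_range_self h x⟩ = f x := by
    intro x
    have h1 : e (Submodule.Quotient.mk x) = ⟨h x, LinearMap.mem_range_self h x⟩ := by
      apply Subtype.ext
      exact LinearMap.quotKerEquivRange_apply_mk h x
    have h2 : e.symm ⟨h x, LinearMap.mem_range_self h x⟩ = Submodule.Quotient.mk x := by
      rw [← h1, LinearEquiv.symm_apply_apply]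
    simp only [hφ, LinearMap.comp_apply, LinearEquiv.coe_coe, h2, hg, Submodule.liftQ_apply]
  have hiso : ∀ s : ↥(LinearMap.range h), ‖φ s‖ = ‖s‖ := by
    rintro ⟨s, x, rfl⟩
    rw [hφ_apply x]
    rw [Submodule.coe_norm]
    exact (hnorm x).symm
  set L : ↥(LinearMap.range h) →ₗᵢ[ℂ] EuclideanSpace ℂ (Fin n) := ⟨φ, hiso⟩ with hL
  set Lx := L.extend with hLx
  have hLxh : ∀ x, Lx (h x) = f x := by
    intro x
    have : Lx ((⟨h x, LinearMap.mem_range_self h x⟩ : ↥(LinearMap.range h)) :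
        EuclideanSpace ℂ (Fin n)) = L ⟨h x, LinearMap.mem_range_self h x⟩ :=
      L.extend_apply _
    simpa [hL] using this.trans (hφ_apply x)
  set U := Matrix.toEuclideanLin.symm Lx.toLinearMap with hUdef
  have hU : Matrix.toEuclideanLin U = Lx.toLinearMap := Matrix.toEuclideanLin.apply_symm_apply _
  have hUmem : U ∈ Matrix.unitaryGroup (Fin n) ℂ := by
    rw [Matrix.mem_unitaryGroup_iff']
    have key : Matrix.toEuclideanLin (Uᴴ * U) =
        Matrix.toEuclideanLin (1 : Matrix (Fin n) (Fin n) ℂ) := by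
      apply LinearMap.ext
      intro y
      apply ext_inner_left ℂ
      intro x
      rw [toEuc_mul, Matrix.toEuclideanLin_conjTranspose_eq_adjoint,
        LinearMap.adjoint_inner_right, hU]
      have : (Lx.toLinearMap x) = Lx x := rfl
      rw [this, show Lx.toLinearMap y = Lx y from rfl, Lx.inner_map_map]
      simp [Matrix.toEuclideanLin_apply, Matrix.one_mulVec]
    have := Matrix.toEuclideanLin.injective key
    rwa [Matrix.star_eq_conjTranspose]
  refine ⟨U, hUmem, ?_⟩
  apply Matrix.toEuclideanLin.injective
  apply LinearMap.ext
  intro x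
  rw [toEuc_mul, hU]
  exact (hLxh x).symm

lemma three_vec {E : Type*} [NormedAddCommGroup E] [InnerProductSpace ℂ E]
    (u v w : E) (hu : ‖u‖ = 1) (hv : ‖v‖ = 1) (hw : ‖w‖ = 1) :
    ‖⟪u, v⟫_ℂ‖ ^ 2 + ‖⟪v, w⟫_ℂ‖ ^ 2 ≤ 1 + ‖⟪u, w⟫_ℂ‖ := by
  set α := ⟪u, v⟫_ℂ with hα
  set β := ⟪v, w⟫_ℂ with hβ
  set γ := ⟪u, w⟫_ℂ with hγ
  set t : ℝ := ‖α‖ ^ 2 + ‖β‖ ^ 2 with ht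
  have htnn : 0 ≤ t := by positivity
  set z := α • u + (starRingEnd ℂ) β • w with hz
  have hwv : ⟪w, v⟫_ℂ = (starRingEnd ℂ) β := by
    rw [hβ, ← inner_conj_symm]
  have hzv : ⟪z, v⟫_ℂ = (t : ℂ) := by
    rw [hz, inner_add_left, inner_smul_left, inner_smul_left, ← hα, hwv,
      starRingEnd_self_apply, RCLike.conj_mul, RCLike.mul_conj]
    push_cast [ht]
    exact_mod_cast rfl
  have step1 : t ≤ ‖z‖ := by
    have h1 : ‖⟪z, v⟫_ℂ‖ = t := by rw [hzv]; simpa using htnn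
    calc t = ‖⟪z, v⟫_ℂ‖ := h1.symm
      _ ≤ ‖z‖ * ‖v‖ := norm_inner_le_norm _ _
      _ = ‖z‖ := by rw [hv, mul_one]
  have step2 : ‖z‖ ^ 2 ≤ t + 2 * (‖α‖ * ‖β‖ * ‖γ‖) := by
    have hns : ‖z‖ ^ 2 = ‖α • u‖ ^ 2 + 2 * Complex.re ⟪α • u, (starRingEnd ℂ) β • w⟫_ℂ
        + ‖(starRingEnd ℂ) β • w‖ ^ 2 := by
      rw [hz]; exact norm_add_sq (𝕜 := ℂ) _ _
    have h1 : ‖α • u‖ = ‖α‖ := by rw [norm_smul, hu, mul_one]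
    have h2 : ‖(starRingEnd ℂ) β • w‖ = ‖β‖ := by
      rw [norm_smul, hw, mul_one, RCLike.norm_conj]
    have h3 : Complex.re ⟪α • u, (starRingEnd ℂ) β • w⟫_ℂ ≤ ‖α‖ * ‖β‖ * ‖γ‖ := by
      calc Complex.re ⟪α • u, (starRingEnd ℂ) β • w⟫_ℂ
          ≤ ‖⟪α • u, (starRingEnd ℂ) β • w⟫_ℂ‖ := Complex.re_le_norm _
        _ = ‖α‖ * ‖β‖ * ‖γ‖ := by
            rw [inner_smul_left, inner_smul_right, ← hγ, norm_mul, norm_mul,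
              RCLike.norm_conj, RCLike.norm_conj]
            ring
    rw [hns, h1, h2, ht]
    nlinarith
  have step3 : 2 * (‖α‖ * ‖β‖) ≤ t := by nlinarith [sq_nonneg (‖α‖ - ‖β‖)]
  have hγnn : (0:ℝ) ≤ ‖γ‖ := norm_nonneg _
  have key : t ^ 2 ≤ t * (1 + ‖γ‖) := by
    calc t ^ 2 ≤ ‖z‖ ^ 2 := by nlinarith [norm_nonneg z]
      _ ≤ t + 2 * (‖α‖ * ‖β‖ * ‖γ‖) := step2
      _ ≤ t + t * ‖γ‖ := by nlinarith
      _ = t * (1 + ‖γ‖) := by ring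
  rcases eq_or_lt_of_le htnn with h0 | h0
  · rw [← h0]; positivity
  · have := le_of_mul_le_mul_left (by nlinarith : t * t ≤ t * (1 + ‖γ‖)) h0
    exact ht ▸ this

lemma fid_polar {n : ℕ} {a b : Matrix (Fin n) (Fin n) ℂ}
    (ha : a.PosSemidef) (hb : b.PosSemidef) :
    ∃ U ∈ Matrix.unitaryGroup (Fin n) ℂ, ∃ H : Matrix (Fin n) (Fin n) ℂ,
      H.PosSemidef ∧ hb.sqrt * ha.sqrt = U * H ∧
      H.trace = ((fidelity ha hb : ℝ) : ℂ) ∧ 0 ≤ fidelity ha hb := by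
  set M := hb.sqrt * ha.sqrt with hM
  obtain ⟨U, hU, hMU⟩ := polar_decomp M
  set H := (Matrix.posSemidef_conjTranspose_mul_self M).sqrt with hH
  have hHpsd : H.PosSemidef :=
    (Matrix.posSemidef_conjTranspose_mul_self M).posSemidef_sqrt
  have heq : ha.sqrt * b * ha.sqrt = Mᴴ * M := by
    rw [hM, conjTranspose_mul, hb.posSemidef_sqrt.isHermitian.eq,
      ha.posSemidef_sqrt.isHermitian.eq,
      show ha.sqrt * hb.sqrt * (hb.sqrt * ha.sqrt)
        = ha.sqrt * (hb.sqrt * hb.sqrt) * ha.sqrt by noncomm_ring,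
      hb.sqrt_mul_self]
  have hfid : fidelity ha hb = H.trace.re := by
    show ((sqrt_mul_mul_sqrt_posSemidef ha hb).sqrt.trace).re = _
    rw [sqrt_congr heq (sqrt_mul_mul_sqrt_posSemidef ha hb)
      (Matrix.posSemidef_conjTranspose_mul_self M)]
  obtain ⟨htr, hnn⟩ := psd_trace hHpsd
  exact ⟨U, hU, H, hHpsd, hMU, by rw [hfid]; exact htr, by rw [hfid]; exact hnn⟩

set_option maxHeartbeats 1600000 in
/-- Public-coin soundness algebra: if `F(σ,τ)² ≤ ζ`, then
`(1/2)·F(σ,ρ)² + (1/2)·F(ρ,τ)² ≤ 1/2 + √ζ/2`. -/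
theorem public_coin_soundness_algebra {n : ℕ}
    {ρ σ τ : Matrix (Fin n) (Fin n) ℂ}
    (hρ : ρ.PosSemidef) (hρtr : ρ.trace = 1)
    (hσ : σ.PosSemidef) (hσtr : σ.trace = 1)
    (hτ : τ.PosSemidef) (hτtr : τ.trace = 1)
    (ζ : ℝ) (hζ : 0 ≤ ζ)
    (h : fidelity hσ hτ ^ 2 ≤ ζ) :
    (1 / 2) * fidelity hσ hρ ^ 2 + (1 / 2) * fidelity hρ hτ ^ 2
      ≤ 1 / 2 + Real.sqrt ζ / 2 := by
  obtain ⟨U₁, hU₁, H₁, hH₁psd, hM₁, hH₁tr, hF₁nn⟩ := fid_polar hσ hρ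
  obtain ⟨U₂, hU₂, H₂, hH₂psd, hM₂, hH₂tr, hF₂nn⟩ := fid_polar hρ hτ
  obtain ⟨U₃, hU₃, H₃, hH₃psd, hM₃, hH₃tr, hF₃nn⟩ := fid_polar hσ hτ
  have hU₁' : U₁ᴴ * U₁ = 1 := by
    rw [← Matrix.star_eq_conjTranspose]; exact Matrix.mem_unitaryGroup_iff'.mp hU₁
  have hU₂' : U₂ * U₂ᴴ = 1 := by
    rw [← Matrix.star_eq_conjTranspose]; exact Matrix.mem_unitaryGroup_iff.mp hU₂
  have hU₂'' : U₂ᴴ * U₂ = 1 := by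
    rw [← Matrix.star_eq_conjTranspose]; exact Matrix.mem_unitaryGroup_iff'.mp hU₂
  set u := _root_.vec (U₁ * hσ.sqrt) with hu
  set v := _root_.vec hρ.sqrt with hv
  set w := _root_.vec (U₂ᴴ * hτ.sqrt) with hw
  -- norms
  have hnu : ‖u‖ = 1 := by
    have h1 : ((‖u‖ ^ 2 : ℝ) : ℂ) = 1 := by
      rw [hu, norm_vec_sq, conjTranspose_mul, hσ.posSemidef_sqrt.isHermitian.eq,
        show hσ.sqrt * U₁ᴴ * (U₁ * hσ.sqrt) = hσ.sqrt * (U₁ᴴ * U₁) * hσ.sqrt by noncomm_ring,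
        hU₁']
      simp [hσ.sqrt_mul_self, hσtr]
    have h2 : ‖u‖ ^ 2 = 1 := by exact_mod_cast h1
    nlinarith [norm_nonneg u]
  have hnv : ‖v‖ = 1 := by
    have h1 : ((‖v‖ ^ 2 : ℝ) : ℂ) = 1 := by
      rw [hv, norm_vec_sq, hρ.posSemidef_sqrt.isHermitian.eq, hρ.sqrt_mul_self, hρtr]
    have h2 : ‖v‖ ^ 2 = 1 := by exact_mod_cast h1
    nlinarith [norm_nonneg v]
  have hnw : ‖w‖ = 1 := by
    have h1 : ((‖w‖ ^ 2 : ℝ) : ℂ) = 1 := by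
      rw [hw, norm_vec_sq, conjTranspose_mul, conjTranspose_conjTranspose,
        hτ.posSemidef_sqrt.isHermitian.eq,
        show hτ.sqrt * U₂ * (U₂ᴴ * hτ.sqrt) = hτ.sqrt * (U₂ * U₂ᴴ) * hτ.sqrt by noncomm_ring,
        hU₂']
      simp [hτ.sqrt_mul_self, hτtr]
    have h2 : ‖w‖ ^ 2 = 1 := by exact_mod_cast h1
    nlinarith [norm_nonneg w]
  -- inner products
  have huv : ⟪u, v⟫_ℂ = ((fidelity hσ hρ : ℝ) : ℂ) := by
    rw [hu, hv, inner_vec, conjTranspose_mul, hσ.posSemidef_sqrt.isHermitian.eq,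
      Matrix.trace_mul_cycle, Matrix.trace_mul_cycle, Matrix.mul_assoc, hM₁,
      ← Matrix.mul_assoc, hU₁', Matrix.one_mul, hH₁tr]
  have hvw : ⟪v, w⟫_ℂ = ((fidelity hρ hτ : ℝ) : ℂ) := by
    rw [hv, hw, inner_vec, hρ.posSemidef_sqrt.isHermitian.eq, ← Matrix.mul_assoc,
      Matrix.trace_mul_cycle, Matrix.trace_mul_cycle, Matrix.mul_assoc, hM₂,
      ← Matrix.mul_assoc, hU₂'', Matrix.one_mul, hH₂tr]
  have huw : ‖⟪u, w⟫_ℂ‖ ≤ fidelity hσ hτ := by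
    have e1 : ⟪u, w⟫_ℂ = (((U₂ * U₁)ᴴ * U₃ * H₃).trace) := by
      rw [hu, hw, inner_vec, conjTranspose_mul, hσ.posSemidef_sqrt.isHermitian.eq,
        show hσ.sqrt * U₁ᴴ * (U₂ᴴ * hτ.sqrt) = hσ.sqrt * (U₁ᴴ * U₂ᴴ) * hτ.sqrt by
          noncomm_ring,
        Matrix.trace_mul_cycle, Matrix.trace_mul_cycle, Matrix.mul_assoc, hM₃,
        show U₁ᴴ * U₂ᴴ = (U₂ * U₁)ᴴ by rw [conjTranspose_mul], Matrix.mul_assoc,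
        ← Matrix.mul_assoc]
    have hQ : (U₂ * U₁)ᴴ * U₃ ∈ Matrix.unitaryGroup (Fin n) ℂ := by
      have h21 : U₂ * U₁ ∈ Matrix.unitaryGroup (Fin n) ℂ := mul_mem hU₂ hU₁
      have hst : star (U₂ * U₁) ∈ Matrix.unitaryGroup (Fin n) ℂ := Unitary.star_mem h21
      rw [Matrix.star_eq_conjTranspose] at hst
      exact mul_mem hst hU₃
    have e2 := trace_unitary_mul_psd_abs hQ hH₃psd
    have e3 : H₃.trace.re = fidelity hσ hτ := by
      have := congrArg Complex.re hH₃tr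
      rwa [Complex.ofReal_re] at this
    rw [Matrix.mul_assoc] at e2
    calc ‖⟪u, w⟫_ℂ‖ = ‖((U₂ * U₁)ᴴ * (U₃ * H₃)).trace‖ := by
          rw [e1, Matrix.mul_assoc]
      _ ≤ H₃.trace.re := e2
      _ = fidelity hσ hτ := e3
  have main := three_vec u v w hnu hnv hnw
  rw [huv, hvw] at main
  simp only [Complex.norm_real, Real.norm_eq_abs, abs_of_nonneg hF₁nn, abs_of_nonneg hF₂nn] at main
  have hsq : fidelity hσ hτ ≤ Real.sqrt ζ := by
    generalize hg : fidelity hσ hτ = F at h hF₃nn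
    nlinarith [Real.sq_sqrt hζ, Real.sqrt_nonneg ζ]
  generalize hg1 : fidelity hσ hρ = F₁ at main hF₁nn
  generalize hg2 : fidelity hρ hτ = F₂ at main hF₂nn
  generalize hg3 : fidelity hσ hτ = F₃ at huw hsq
  linarith
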